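/- Let c ∈ ℂ and R = ℂ[t, t^{-1}, u | u² = t⁴ − 2ct² + 1]. For all integers i, j, in Ω¹_R/dR one has (class of t^{i-1}u·d(t^{j-1}u)) = ( (j+1)δ_{i+j,−2} − 2cj·δ_{i+j,0} + (j−1)δ_{i+j,2} )·ω₀, where δ is the Kronecker delta. -/

import Mathlib

noncomputable section
open Polynomial LaurentPolynomial

/-- The ring `R = ℂ[t,t⁻¹][u]/(u² − (t⁴ − 2ct² + 1))`, realized by adjoining a root `u`
of `X² − (t⁴ − 2ct² + 1)` to the ring of Laurent polynomials `ℂ[t,t⁻¹]`. -/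
abbrev DJKM (c : ℂ) : Type :=
  AdjoinRoot ((X : Polynomial (LaurentPolynomial ℂ)) ^ 2 -
    Polynomial.C (T 4 - 2 * LaurentPolynomial.C c * T 2 + 1))

/-- The element `t^i` of `R`, for `i : ℤ`. -/
def tp (c : ℂ) (i : ℤ) : DJKM c := AdjoinRoot.of _ (T i)

/-- The element `u` of `R`. -/
def uu (c : ℂ) : DJKM c := AdjoinRoot.root _

/-- The subspace `dR ⊆ Ω¹_R` of exact differentials. -/
def dR (c : ℂ) : Submodule ℂ (KaehlerDifferential ℂ (DJKM c)) :=
  LinearMap.range (KaehlerDifferential.D ℂ (DJKM c)).toLinearMap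

/-- The class of `f·dg` in `Ω¹_R/dR`. -/
def cls (c : ℂ) (f g : DJKM c) : KaehlerDifferential ℂ (DJKM c) ⧸ dR c :=
  Submodule.Quotient.mk (f • KaehlerDifferential.D ℂ (DJKM c) g)

/-- `ω_k` : the class of `t^k·u·dt` in `Ω¹_R/dR`. -/
def w (c : ℂ) (k : ℤ) : KaehlerDifferential ℂ (DJKM c) ⧸ dR c :=
  cls c (tp c k * uu c) (tp c 1)

/-- `ω₀` : the class of `t⁻¹·dt` in `Ω¹_R/dR`. -/
def w0 (c : ℂ) : KaehlerDifferential ℂ (DJKM c) ⧸ dR c :=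
  cls c (tp c (-1)) (tp c 1)

section Aux

variable (c : ℂ)

local notation "Dd" => KaehlerDifferential.D ℂ (DJKM c)

lemma tp_mul (a b : ℤ) : tp c a * tp c b = tp c (a + b) := by
  rw [tp, tp, tp, ← map_mul, ← T_add]

lemma tp_zero : tp c 0 = 1 := by simp [tp, T_zero]

lemma tp_smul_tp_smul (a b : ℤ) (m : KaehlerDifferential ℂ (DJKM c)) :
    tp c a • tp c b • m = tp c (a + b) • m := by rw [smul_smul, tp_mul]

lemma u_mul_u : uu c * uu c = tp c 4 - (2 * c) • tp c 2 + 1 := by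
  have h := AdjoinRoot.eval₂_root ((X : Polynomial (LaurentPolynomial ℂ)) ^ 2 -
    Polynomial.C (T 4 - 2 * LaurentPolynomial.C c * T 2 + 1))
  simp only [eval₂_sub, eval₂_pow, eval₂_X, Polynomial.eval₂_C, sub_eq_zero] at h
  rw [show uu c * uu c = uu c ^ 2 by ring, uu, h]
  simp [tp, Algebra.smul_def, AdjoinRoot.algebraMap_eq', LaurentPolynomial.algebraMap_apply,
    map_sub, map_add, map_mul, map_one, map_ofNat]

lemma D_tp (n : ℤ) : Dd (tp c n) = (n : ℂ) • (tp c (n - 1) • Dd (tp c 1)) := by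
  induction n using Int.induction_on with
  | zero => simp [tp_zero]
  | succ k ih =>
    rw [← tp_mul c k 1, Derivation.leibniz, ih, smul_comm (tp c 1), tp_smul_tp_smul,
      show (1 : ℤ) + ((k : ℤ) - 1) = k by ring, show ((k : ℤ) + 1 - 1) = k by ring]
    push_cast
    module
  | pred k ih =>
    have hsplit : tp c (-(k : ℤ)) = tp c (-(k : ℤ) - 1) * tp c 1 := by
      rw [tp_mul, show (-(k : ℤ) - 1 + 1) = -k by ring]
    have h2 : tp c 1 • Dd (tp c (-(k : ℤ) - 1)) =
        ((-(k : ℤ) - 1 : ℤ) : ℂ) • (tp c (-(k : ℤ) - 1) • Dd (tp c 1)) := by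
      have h := Derivation.leibniz Dd (tp c (-(k : ℤ) - 1)) (tp c 1)
      rw [← hsplit, ih] at h
      have := h.symm
      push_cast at this ⊢
      linear_combination (norm := module) this
    have h3 : Dd (tp c (-(k : ℤ) - 1)) = tp c (-1) • (tp c 1 • Dd (tp c (-(k : ℤ) - 1))) := by
      rw [smul_smul, tp_mul, show (-1 : ℤ) + 1 = 0 by ring, tp_zero, one_smul]
    rw [h3, h2, smul_comm, tp_smul_tp_smul, show (-1 : ℤ) + (-(k : ℤ) - 1) = -(k:ℤ) - 1 - 1 by ring]

lemma mem_dR (k : ℤ) (hk : k ≠ -1) : tp c k • Dd (tp c 1) ∈ dR c := by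
  have hD := D_tp c (k + 1)
  rw [show (k + 1 - 1 : ℤ) = k by ring] at hD
  have hne : ((k + 1 : ℤ) : ℂ) ≠ 0 := by
    simp only [ne_eq, Int.cast_eq_zero]
    omega
  have heq : tp c k • Dd (tp c 1) = ((k + 1 : ℤ) : ℂ)⁻¹ • Dd (tp c (k + 1)) := by
    rw [hD, smul_smul, inv_mul_cancel₀ hne, one_smul]
  rw [heq]
  exact Submodule.smul_mem _ _ ⟨tp c (k + 1), rfl⟩

lemma u_smul_Du : uu c • Dd (uu c) =
    (2 : ℂ) • (tp c 3 • Dd (tp c 1)) - (2 * c) • (tp c 1 • Dd (tp c 1)) := by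
  have h1 : Dd (uu c * uu c) = uu c • Dd (uu c) + uu c • Dd (uu c) :=
    Derivation.leibniz _ _ _
  have h2 : Dd (uu c * uu c) =
      (4 : ℂ) • (tp c 3 • Dd (tp c 1)) - (4 * c) • (tp c 1 • Dd (tp c 1)) := by
    rw [u_mul_u]
    simp only [map_add, map_sub, Derivation.map_smul, Derivation.map_one_eq_zero]
    rw [D_tp c 4, D_tp c 2]
    norm_num [smul_smul]
    rw [show (2 * c * 2) = 4 * c by ring]
  have h3 : uu c • Dd (uu c) = (2 : ℂ)⁻¹ • Dd (uu c * uu c) := by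
    rw [h1, ← two_smul ℂ, smul_smul]
    norm_num
  rw [h3, h2, smul_sub, smul_smul, smul_smul,
    show ((2:ℂ)⁻¹ * 4) = 2 by norm_num, show ((2:ℂ)⁻¹ * (4 * c)) = 2 * c by ring]

lemma q_eq (k : ℤ) :
    (Submodule.Quotient.mk (tp c k • Dd (tp c 1)) :
      KaehlerDifferential ℂ (DJKM c) ⧸ dR c) = (if k = -1 then (1:ℂ) else 0) • w0 c := by
  by_cases hk : k = -1
  · subst hk
    simp [w0, cls]
  · rw [if_neg hk, zero_smul]
    exact (Submodule.Quotient.mk_eq_zero _).2 (mem_dR c k hk)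

lemma comb {M : Type*} [AddCommGroup M] [Module ℂ M] (a b e : M) (z x : ℂ) :
    (2:ℂ) • a - x • b + ((z - 1) • a - (z - 1) • (x • b) + (z - 1) • e)
      = (z + 1) • a + (-(x * z)) • b + (z - 1) • e := by module

lemma t1_lem (i j : ℤ) : (tp c (i-1) * uu c) • (tp c (j-1) • Dd (uu c)) =
    (2:ℂ) • (tp c (i+j+1) • Dd (tp c 1)) - (2*c) • (tp c (i+j-1) • Dd (tp c 1)) := by
  rw [smul_smul, show tp c (i-1) * uu c * tp c (j-1) = tp c (i+j-2) * uu c by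
      rw [mul_right_comm, tp_mul, show (i-1)+(j-1) = i+j-2 by ring],
    mul_smul, u_smul_Du, smul_sub, smul_comm (tp c (i+j-2)) (2:ℂ),
    smul_comm (tp c (i+j-2)) (2*c), tp_smul_tp_smul, tp_smul_tp_smul,
    show (i+j-2)+3 = i+j+1 by ring, show (i+j-2)+1 = i+j-1 by ring]

lemma t2_lem (i j : ℤ) : (tp c (i-1) * uu c) • (uu c • Dd (tp c (j-1))) =
    ((j:ℂ)-1) • (tp c (i+j+1) • Dd (tp c 1))
    - ((j:ℂ)-1) • ((2*c) • (tp c (i+j-1) • Dd (tp c 1)))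
    + ((j:ℂ)-1) • (tp c (i+j-3) • Dd (tp c 1)) := by
  have e : tp c (i-1) * (uu c * uu c) = tp c (i+3) - (2*c) • tp c (i+1) + tp c (i-1) := by
    rw [u_mul_u, mul_add, mul_sub, mul_smul_comm, tp_mul, tp_mul, mul_one,
      show (i-1)+4 = i+3 by ring, show (i-1)+2 = i+1 by ring]
  rw [smul_smul]
  rw [mul_assoc (tp c (i-1)) (uu c) (uu c)]
  rw [e]
  rw [D_tp c (j-1)]
  rw [smul_comm _ ((((j:ℤ)-1 : ℤ)) : ℂ), add_smul, sub_smul, smul_assoc,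
    tp_smul_tp_smul, tp_smul_tp_smul, tp_smul_tp_smul,
    show (i+3)+(j-1-1) = i+j+1 by ring, show (i+1)+(j-1-1) = i+j-1 by ring,
    show (i-1)+(j-1-1) = i+j-3 by ring]
  push_cast
  rw [smul_add, smul_sub]

lemma key_lem (i j : ℤ) : (tp c (i-1) * uu c) • Dd (tp c (j-1) * uu c) =
    ((j:ℂ)+1) • (tp c (i+j+1) • Dd (tp c 1))
    + (-(2*c*(j:ℂ))) • (tp c (i+j-1) • Dd (tp c 1))
    + ((j:ℂ)-1) • (tp c (i+j-3) • Dd (tp c 1)) := by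
  rw [Derivation.leibniz, smul_add, t1_lem, t2_lem, show (2*c*(j:ℂ)) = (2*c)*(j:ℂ) by ring]
  exact comb _ _ _ _ _

end Aux

/-- For all integers `i, j`, the class of `t^{i-1}u·d(t^{j-1}u)` equals
`((j+1)δ_{i+j,−2} − 2cj·δ_{i+j,0} + (j−1)δ_{i+j,2})·ω₀`. -/
theorem stmt3 (c : ℂ) (i j : ℤ) :
    cls c (tp c (i - 1) * uu c) (tp c (j - 1) * uu c) =
      (((j : ℂ) + 1) * (if i + j = -2 then 1 else 0)
        - 2 * c * (j : ℂ) * (if i + j = 0 then 1 else 0)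
        + ((j : ℂ) - 1) * (if i + j = 2 then 1 else 0)) • w0 c := by
  have mkC : ∀ (r : ℂ) (x : KaehlerDifferential ℂ (DJKM c)),
      (Submodule.Quotient.mk (r • x) : KaehlerDifferential ℂ (DJKM c) ⧸ dR c)
        = r • Submodule.Quotient.mk x := fun r x => Submodule.Quotient.mk_smul (dR c) r x
  rw [cls, key_lem, Submodule.Quotient.mk_add, Submodule.Quotient.mk_add,
    mkC, mkC, mkC, q_eq, q_eq, q_eq, smul_smul, smul_smul, smul_smul, ← add_smul, ← add_smul]
  congr 1
  simp only [show (i+j+1 = -1) ↔ (i+j = -2) from by omega,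
    show (i+j-1 = -1) ↔ (i+j = 0) from by omega,
    show (i+j-3 = -1) ↔ (i+j = 2) from by omega]
  ring
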